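/- Let m, x, x', μ, μ', Δ, θ be real numbers with Δ ≥ 1, 0 < θ ≤ 1, |x − μ| ≤ Δ, |x' − μ'| ≤ Δ, μ ≤ m + Δ, m − x ≥ 1, and m + Δ − μ ≥ θ (m + Δ − μ'). Then 3Δ (m − x) ≥ θ (m − x'). -/
import Mathlib

/-- if Δ ≥ 1, 0 < θ ≤ 1, |x − μ| ≤ Δ, |x' − μ'| ≤ Δ, μ ≤ m + Δ,
m − x ≥ 1, and m + Δ − μ ≥ θ(m + Δ − μ'), then 3Δ(m − x) ≥ θ(m − x'). -/
theorem stmt8 (m x x' μ μ' Δ θ : ℝ) (hΔ : 1 ≤ Δ) (hθ0 : 0 < θ) (hθ1 : θ ≤ 1)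
    (hx : |x - μ| ≤ Δ) (hx' : |x' - μ'| ≤ Δ) (hμ : μ ≤ m + Δ) (hmx : 1 ≤ m - x)
    (h : θ * (m + Δ - μ') ≤ m + Δ - μ) :
    θ * (m - x') ≤ 3 * Δ * (m - x) := by
  rw [abs_le] at hx hx'
  nlinarith [mul_le_mul_of_nonneg_left (show m - x' ≤ m + Δ - μ' by linarith) hθ0.le,
    mul_le_mul_of_nonneg_left (show (1:ℝ) ≤ m - x by linarith) (show (0:ℝ) ≤ 2*Δ by linarith)]
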